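/- arXiv:2602.19195 — 3 statements merged into one kernel-verified Lean document; each statement's English description precedes it below -/
import Mathlib

section
/- For every real number x with 0 < |x| < π, x·cot(x) = -2 · Σ_{n=0}^{∞} (ζ(2n)/π^{2n}) · x^{2n}, where ζ denotes the Riemann zeta function (with ζ(0) = -1/2 given by analytic continuation) and the series converges. -/
open Real

open Filter


lemma aux_summable_inv_sq : Summable (fun k : ℕ => 1 / ((k : ℝ) + 1) ^ 2) := by
  have := (summable_nat_add_iff 1).mpr <| Real.summable_one_div_nat_pow.mpr one_lt_two
  exact this.congr fun n => by push_cast; ring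

lemma euler_log_hasSum {x : ℝ} (hx : 0 < x) (hxπ : x < π) :
    HasSum (fun k : ℕ => Real.log (1 - x ^ 2 / (((k : ℝ) + 1) ^ 2 * π ^ 2)))
      (Real.log (Real.sin x / x)) := by
  have hπ := Real.pi_pos
  set f : ℕ → ℝ := fun k => Real.log (1 - x ^ 2 / (((k : ℝ) + 1) ^ 2 * π ^ 2)) with hf
  have hfac : ∀ k : ℕ, 0 < 1 - x ^ 2 / (((k : ℝ) + 1) ^ 2 * π ^ 2) := by
    intro k
    have h1 : (0:ℝ) < ((k : ℝ) + 1) ^ 2 * π ^ 2 := by positivity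
    rw [sub_pos, div_lt_one h1]
    have h2 : x ^ 2 < π ^ 2 := by
      apply pow_lt_pow_left₀ hxπ hx.le
      norm_num
    calc x ^ 2 < π ^ 2 := h2
      _ = 1 * π ^ 2 := by ring
      _ ≤ ((k : ℝ) + 1) ^ 2 * π ^ 2 := by
          apply mul_le_mul_of_nonneg_right _ (by positivity)
          have : (1:ℝ) ≤ (k:ℝ) + 1 := by
            have := Nat.cast_nonneg (α := ℝ) k; linarith
          nlinarith
  -- partial products tend to sin x / x
  have hprod : Tendsto (fun n : ℕ => ∏ j ∈ Finset.range n,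
      (1 - x ^ 2 / (((j : ℝ) + 1) ^ 2 * π ^ 2))) atTop (nhds (Real.sin x / x)) := by
    have h := Real.tendsto_euler_sin_prod (x / π)
    have hx' : π * (x / π) = x := by field_simp
    rw [hx'] at h
    have h2 : Tendsto (fun n : ℕ => (x * ∏ j ∈ Finset.range n,
        (1 - x ^ 2 / (((j : ℝ) + 1) ^ 2 * π ^ 2))) / x) atTop (nhds (Real.sin x / x)) := by
      apply Tendsto.div_const
      refine h.congr fun n => ?_
      congr 1
      refine Finset.prod_congr rfl fun j _ => ?_
      rw [div_pow, div_div, mul_comm (π^2)]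
    refine h2.congr fun n => ?_
    rw [mul_div_assoc]
    rw [mul_comm, div_mul_cancel₀ _ hx.ne']
  have hsinx : 0 < Real.sin x / x := div_pos (Real.sin_pos_of_pos_of_lt_pi hx hxπ) hx
  -- partial sums of logs tend to log (sin x / x)
  have hlog : Tendsto (fun n : ℕ => ∑ j ∈ Finset.range n, f j) atTop
      (nhds (Real.log (Real.sin x / x))) := by
    have hcont := (Real.continuousAt_log hsinx.ne').tendsto.comp hprod
    refine hcont.congr fun n => ?_
    rw [Function.comp_apply, Real.log_prod]
    intro j _
    exact (hfac j).ne'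
  -- summability
  have hnonpos : ∀ k, f k ≤ 0 := fun k =>
    Real.log_nonpos (hfac k).le (by
      have h1 : (0:ℝ) < x ^ 2 / (((k : ℝ) + 1) ^ 2 * π ^ 2) := by positivity
      linarith)
  have hsum : Summable f := by
    rw [← summable_neg_iff]
    apply summable_of_sum_range_le (c := -(Real.log (Real.sin x / x)))
    · intro k; simpa using hnonpos k
    · intro n
      have hmono : Monotone (fun n : ℕ => ∑ j ∈ Finset.range n, (-f j)) := by
        intro a b hab
        apply Finset.sum_le_sum_of_subset_of_nonneg (Finset.range_subset_range.mpr hab)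
        intro j _ _; simpa using hnonpos j
      have htend : Tendsto (fun n : ℕ => ∑ j ∈ Finset.range n, (-f j)) atTop
          (nhds (-(Real.log (Real.sin x / x)))) := by
        simpa [Finset.sum_neg_distrib] using hlog.neg
      exact hmono.ge_of_tendsto htend n
  have := hsum.hasSum
  rwa [tendsto_nhds_unique hsum.hasSum.tendsto_sum_nat hlog] at this

lemma cot_hasSum {x : ℝ} (hx : 0 < x) (hxπ : x < π) :
    HasSum (fun k : ℕ => -2 * x / (((k : ℝ) + 1) ^ 2 * π ^ 2 - x ^ 2))
      (Real.cot x - 1 / x) := by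
  have hπ := Real.pi_pos
  set b : ℝ := (x + π) / 2 with hb
  have hxb : x < b := by rw [hb]; linarith
  have hbπ : b < π := by rw [hb]; linarith
  have hb0 : 0 < b := by rw [hb]; linarith
  set t : Set ℝ := Set.Ioo 0 b with ht
  have hxt : x ∈ t := ⟨hx, hxb⟩
  set g : ℕ → ℝ → ℝ := fun k y => Real.log (1 - y ^ 2 / (((k : ℝ) + 1) ^ 2 * π ^ 2)) with hg
  set g' : ℕ → ℝ → ℝ := fun k y => -2 * y / (((k : ℝ) + 1) ^ 2 * π ^ 2 - y ^ 2) with hg'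
  set u : ℕ → ℝ := fun k => 2 * b / ((π ^ 2 - b ^ 2) * ((k : ℝ) + 1) ^ 2) with hu
  have hk1 : ∀ k : ℕ, (1:ℝ) ≤ ((k:ℝ)+1) := fun k => by
    have := Nat.cast_nonneg (α := ℝ) k; linarith
  have hdenpos : ∀ (k : ℕ) (y : ℝ), y ∈ t → 0 < ((k : ℝ) + 1) ^ 2 * π ^ 2 - y ^ 2 := by
    intro k y hy
    have h1 : y ^ 2 < b ^ 2 := by nlinarith [hy.1, hy.2]
    have h2 : b ^ 2 < π ^ 2 := by nlinarith
    have hK : (1:ℝ) ≤ ((k:ℝ)+1) ^ 2 := by nlinarith [hk1 k]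
    nlinarith [mul_le_mul_of_nonneg_right hK (sq_nonneg π)]
  have hfacpos : ∀ (k : ℕ) (y : ℝ), y ∈ t → 0 < 1 - y ^ 2 / (((k : ℝ) + 1) ^ 2 * π ^ 2) := by
    intro k y hy
    have h0 : (0:ℝ) < ((k : ℝ) + 1) ^ 2 * π ^ 2 := by positivity
    rw [sub_pos, div_lt_one h0]
    have := hdenpos k y hy
    linarith
  have husum : Summable u := by
    have := aux_summable_inv_sq.mul_left (2 * b / (π ^ 2 - b ^ 2))
    refine this.congr fun k => ?_
    rw [hu]
    field_simp
  have hderiv : ∀ (k : ℕ) (y : ℝ), y ∈ t → HasDerivAt (g k) (g' k y) y := by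
    intro k y hy
    have hc : (0:ℝ) < ((k : ℝ) + 1) ^ 2 * π ^ 2 := by positivity
    have hinner : HasDerivAt (fun y : ℝ => 1 - y ^ 2 / (((k : ℝ) + 1) ^ 2 * π ^ 2))
        (-(2 * y / (((k : ℝ) + 1) ^ 2 * π ^ 2))) y := by
      have := ((hasDerivAt_pow 2 y).div_const (((k : ℝ) + 1) ^ 2 * π ^ 2)).const_sub 1
      refine this.congr_deriv ?_
      push_cast; ring
    have hlog := hinner.log (hfacpos k y hy).ne'
    convert hlog using 1
    rw [hg']
    have hd := hdenpos k y hy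
    field_simp
  have hbound : ∀ (k : ℕ) (y : ℝ), y ∈ t → ‖g' k y‖ ≤ u k := by
    intro k y hy
    have hd := hdenpos k y hy
    have hy0 := hy.1
    have hyb := hy.2
    rw [hg', hu, Real.norm_eq_abs, abs_div, abs_of_pos hd]
    have habs : |(-2 : ℝ) * y| = 2 * y := by
      rw [abs_of_nonpos (by nlinarith)]; ring
    rw [habs]
    have hden2 : (π ^ 2 - b ^ 2) * ((k : ℝ) + 1) ^ 2 ≤ ((k : ℝ) + 1) ^ 2 * π ^ 2 - y ^ 2 := by
      have h1 : y ^ 2 ≤ b ^ 2 := by nlinarith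
      have hK : (1:ℝ) ≤ ((k:ℝ)+1) ^ 2 := by nlinarith [hk1 k]
      have h2 : b ^ 2 ≤ b ^ 2 * ((k:ℝ)+1) ^ 2 := by nlinarith [sq_nonneg b]
      nlinarith
    have hp1 : (0:ℝ) < (π ^ 2 - b ^ 2) * ((k : ℝ) + 1) ^ 2 := by
      have h3 : b ^ 2 < π ^ 2 := by nlinarith
      have hK : (1:ℝ) ≤ ((k:ℝ)+1) ^ 2 := by nlinarith [hk1 k]
      nlinarith
    exact div_le_div₀ (by linarith) (by linarith) hp1 hden2
  have hg0 : Summable fun k => g k x := (euler_log_hasSum hx hxπ).summable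
  have key : HasDerivAt (fun z => ∑' k, g k z) (∑' k, g' k x) x :=
    hasDerivAt_tsum_of_isPreconnected husum isOpen_Ioo (convex_Ioo 0 b).isPreconnected
      hderiv hbound hxt hg0 hxt
  -- identify the function with log (sin y) - log y near x
  have heq : (fun z => ∑' k, g k z) =ᶠ[nhds x] fun y => Real.log (Real.sin y) - Real.log y := by
    filter_upwards [isOpen_Ioo.mem_nhds hxt] with y hy
    have hy0 := hy.1
    have hyπ : y < π := lt_trans hy.2 hbπ
    rw [(euler_log_hasSum hy0 hyπ).tsum_eq,
      Real.log_div (Real.sin_pos_of_pos_of_lt_pi hy0 hyπ).ne' hy0.ne']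
  have hG : HasDerivAt (fun y => Real.log (Real.sin y) - Real.log y)
      (Real.cot x - 1 / x) x := by
    have h1 : HasDerivAt (fun y => Real.log (Real.sin y)) (Real.cos x / Real.sin x) x :=
      (Real.hasDerivAt_sin x).log (Real.sin_pos_of_pos_of_lt_pi hx hxπ).ne'
    have h2 : HasDerivAt Real.log x⁻¹ x := Real.hasDerivAt_log hx.ne'
    have := h1.sub h2
    rw [← Real.cot_eq_cos_div_sin] at this
    rw [one_div]; exact this
  have hF : HasDerivAt (fun z => ∑' k, g k z) (Real.cot x - 1 / x) x :=
    hG.congr_of_eventuallyEq heq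
  have hDval : ∑' k, g' k x = Real.cot x - 1 / x := hF.unique key ▸ rfl
  have hsum' : Summable fun k => g' k x :=
    Summable.of_norm_bounded husum fun k => hbound k x hxt
  have := hsum'.hasSum
  rw [hDval] at this
  exact this.congr_fun fun k => by rw [hg']

set_option maxHeartbeats 1000000 in
lemma main_real {x : ℝ} (hx : 0 < x) (hxπ : x < π) :
    HasSum (fun n : ℕ => if n = 0 then (1:ℝ) else
      -2 * ∑' k : ℕ, (x ^ 2 / (((k : ℝ) + 1) ^ 2 * π ^ 2)) ^ n) (x * Real.cot x) := by
  have hπ := Real.pi_pos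
  set q : ℕ → ℝ := fun k => x ^ 2 / (((k : ℝ) + 1) ^ 2 * π ^ 2) with hqdef
  have hk1 : ∀ k : ℕ, (1:ℝ) ≤ ((k:ℝ)+1) := fun k => by
    have := Nat.cast_nonneg (α := ℝ) k; linarith
  have hq0 : ∀ k, 0 < q k := fun k => by
    have : (0:ℝ) < ((k:ℝ)+1) ^ 2 * π ^ 2 := by positivity
    exact div_pos (by positivity) this
  have hq1 : ∀ k, q k < 1 := by
    intro k
    have hden : (0:ℝ) < ((k:ℝ)+1) ^ 2 * π ^ 2 := by positivity
    rw [hqdef, div_lt_one hden]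
    have hK : (1:ℝ) ≤ ((k:ℝ)+1) ^ 2 := by nlinarith [hk1 k]
    have hx2 : x ^ 2 < π ^ 2 := by nlinarith
    nlinarith [mul_le_mul_of_nonneg_right hK (sq_nonneg π)]
  have hρ : x ^ 2 / π ^ 2 < 1 := by
    rw [div_lt_one (by positivity)]; nlinarith
  have hqeq : ∀ k, q k = x ^ 2 / π ^ 2 * (1 / ((k:ℝ)+1) ^ 2) := fun k => by
    rw [hqdef]; field_simp
  have hqsum : Summable q := by
    refine (aux_summable_inv_sq.mul_left (x ^ 2 / π ^ 2)).congr fun k => (hqeq k).symm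
  -- row summability: for each n, fun k => q k ^ (n+1) is summable
  have hrowsum : ∀ n : ℕ, Summable fun k => q k ^ (n + 1) := by
    intro n
    refine hqsum.of_nonneg_of_le (fun k => by positivity) fun k => ?_
    calc q k ^ (n + 1) = q k ^ n * q k := by rw [pow_succ]
      _ ≤ 1 ^ n * q k := by
          gcongr
          exact (hq1 k).le
      _ = q k := by rw [one_pow, one_mul]
  -- the double-indexed function
  set f : ℕ × ℕ → ℝ := fun p => -2 * q p.2 ^ (p.1 + 1) with hfdef
  have hcol : ∀ k : ℕ, HasSum (fun n => f (n, k)) (-2 * (q k / (1 - q k))) := by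
    intro k
    have hgeo := (hasSum_geometric_of_lt_one (hq0 k).le (hq1 k)).mul_left (-2 * q k)
    have h1 : (fun n : ℕ => -2 * q k * q k ^ n) = fun n => f (n, k) := by
      funext n; simp only [hfdef]; rw [pow_succ]; ring
    have h2 : -2 * q k * (1 - q k)⁻¹ = -2 * (q k / (1 - q k)) := by
      rw [div_eq_mul_inv]; ring
    rwa [h1, h2] at hgeo
  -- the sum over k of the fiber sums is x * cot x - 1
  have hcot := (cot_hasSum hx hxπ).mul_left x
  have hcot' : HasSum (fun k => -2 * (q k / (1 - q k))) (x * Real.cot x - 1) := by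
    have hval : x * (Real.cot x - 1 / x) = x * Real.cot x - 1 := by
      field_simp
    rw [hval] at hcot
    have hfun : (fun k : ℕ => x * (-2 * x / (((k : ℝ) + 1) ^ 2 * π ^ 2 - x ^ 2)))
        = fun k => -2 * (q k / (1 - q k)) := by
      funext k
      have hc : (0:ℝ) < ((k:ℝ)+1) ^ 2 * π ^ 2 := by positivity
      have h1q : 0 < 1 - q k := by linarith [hq1 k]
      have hd : (0:ℝ) < ((k:ℝ)+1) ^ 2 * π ^ 2 - x ^ 2 := by
        have : 1 - q k = (((k:ℝ)+1) ^ 2 * π ^ 2 - x ^ 2) / (((k:ℝ)+1) ^ 2 * π ^ 2) := by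
          rw [hqdef]; field_simp
        rw [this] at h1q
        exact (div_pos_iff.mp h1q).resolve_right (fun h => absurd h.2 (not_lt.mpr hc.le)) |>.1
      simp only [hqdef]
      field_simp
      try ring
      try exact Or.inl trivial
      try tauto
    rwa [hfun] at hcot
  -- summability over ℕ × ℕ
  set ρ : ℝ := x ^ 2 / π ^ 2 with hρdef
  have hρ0 : (0:ℝ) ≤ ρ := by positivity
  have hqleρ : ∀ k, q k ≤ ρ := by
    intro k
    rw [hqeq k, hρdef]
    have hK : (1:ℝ) ≤ ((k:ℝ)+1) ^ 2 := by nlinarith [hk1 k]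
    calc x ^ 2 / π ^ 2 * (1 / ((k:ℝ)+1) ^ 2) ≤ x ^ 2 / π ^ 2 * 1 := by
          gcongr
          rw [div_le_one (by positivity)]; exact hK
      _ = x ^ 2 / π ^ 2 := mul_one _
  have hFsum : Summable fun p : ℕ × ℕ => 2 * q p.2 ^ (p.1 + 1) := by
    rw [summable_prod_of_nonneg (fun p => by positivity)]
    constructor
    · intro n; exact (hrowsum n).mul_left 2
    · refine Summable.of_nonneg_of_le (fun n => tsum_nonneg fun k => by positivity)
        (fun n => ?_) (((summable_geometric_of_lt_one hρ0 hρ).mul_right (∑' k, q k)).mul_left 2)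
      have hterm : ∀ k, 2 * q k ^ (n + 1) ≤ 2 * (ρ ^ n * q k) := by
        intro k
        have h1 : q k ^ (n + 1) = q k ^ n * q k := pow_succ _ _
        have h2 : q k ^ n ≤ ρ ^ n := pow_le_pow_left₀ (hq0 k).le (hqleρ k) n
        rw [h1]
        have := mul_le_mul_of_nonneg_right h2 (hq0 k).le
        linarith
      calc ∑' k, 2 * q k ^ (n + 1) ≤ ∑' k, 2 * (ρ ^ n * q k) :=
            Summable.tsum_le_tsum hterm ((hrowsum n).mul_left 2) ((hqsum.mul_left (ρ ^ n)).mul_left 2)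
        _ = 2 * (ρ ^ n * ∑' k, q k) := by rw [tsum_mul_left, tsum_mul_left]
  have hfsum : Summable f := by
    have := hFsum.neg
    refine this.congr fun p => ?_
    rw [hfdef]; ring
  have hf := hfsum.hasSum
  have hswap : HasSum (fun p : ℕ × ℕ => f (p.2, p.1)) (∑' p, f p) :=
    ((Equiv.prodComm ℕ ℕ).hasSum_iff).mpr hf
  have h1 : HasSum (fun k => -2 * (q k / (1 - q k))) (∑' p, f p) :=
    HasSum.prod_fiberwise hswap hcol
  have hvaltsum : ∑' p, f p = x * Real.cot x - 1 := h1.unique hcot'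
  have hrow : ∀ n : ℕ, HasSum (fun k => f (n, k)) (-2 * ∑' k, q k ^ (n + 1)) := by
    intro n
    exact ((hrowsum n).hasSum).mul_left (-2)
  have h2 : HasSum (fun n : ℕ => -2 * ∑' k, q k ^ (n + 1)) (x * Real.cot x - 1) := by
    have := hf.prod_fiberwise hrow
    rwa [hvaltsum] at this
  -- shift the index
  refine (hasSum_nat_add_iff' 1).mp ?_
  have hshift : (fun n : ℕ => if n + 1 = 0 then (1:ℝ) else
      -2 * ∑' k : ℕ, (x ^ 2 / (((k : ℝ) + 1) ^ 2 * π ^ 2)) ^ (n + 1))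
      = fun n : ℕ => -2 * ∑' k, q k ^ (n + 1) := by
    funext n
    simp [hqdef]
  rw [hshift]
  simpa using h2


set_option maxHeartbeats 1000000 in
/-- The cotangent series expansion `x·cot(x) = -2 ∑_{n≥0} (ζ(2n)/π^{2n}) x^{2n}`
for `0 < |x| < π`, together with the convergence of the series. -/
theorem x_mul_cot_eq_series (x : ℝ) (hx0 : 0 < |x|) (hxπ : |x| < π) :
    HasSum (fun n : ℕ => -2 * (riemannZeta (2 * n) / (π : ℂ) ^ (2 * n) * (x : ℂ) ^ (2 * n)))
      ((x * Real.cot x : ℝ) : ℂ) := by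
  have hπ := Real.pi_pos
  set y : ℝ := |x| with hy
  have hy0 : 0 < y := hx0
  have hyπ : y < π := hxπ
  have hmain := main_real hy0 hyπ
  have hcot : x * Real.cot x = y * Real.cot y := by
    rcases abs_cases x with ⟨h1, _⟩ | ⟨h1, _⟩
    · rw [hy, h1]
    · rw [hy, h1, Real.cot_eq_cos_div_sin, Real.cot_eq_cos_div_sin, Real.cos_neg, Real.sin_neg]
      rw [div_neg]
      ring
  have h := Complex.hasSum_ofReal.mpr hmain
  have hterm : ∀ n : ℕ,
      -2 * (riemannZeta (2 * n) / (π : ℂ) ^ (2 * n) * (x : ℂ) ^ (2 * n))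
        = (((if n = 0 then (1:ℝ) else
            -2 * ∑' k : ℕ, (y ^ 2 / (((k : ℝ) + 1) ^ 2 * π ^ 2)) ^ n) : ℝ) : ℂ) := by
    intro n
    rcases eq_or_ne n 0 with hn | hn
    · subst hn
      simp [riemannZeta_zero]
      norm_num
    · have h2n : 1 < 2 * n := by omega
      have hzarg : ((2 * n : ℕ) : ℂ) = 2 * (n : ℂ) := by push_cast; ring
      have hz := zeta_nat_eq_tsum_of_gt_one h2n
      rw [hzarg] at hz
      have hsreal : Summable (fun k : ℕ => 1 / (k : ℝ) ^ (2 * n)) :=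
        Real.summable_one_div_nat_pow.mpr h2n
      have hs : Summable (fun k : ℕ => 1 / (k : ℂ) ^ (2 * n)) := by
        have := Complex.summable_ofReal.mpr hsreal
        refine this.congr fun k => ?_
        push_cast
        ring
      rw [Summable.tsum_eq_zero_add hs] at hz
      have hz0 : (1 : ℂ) / ((0 : ℕ) : ℂ) ^ (2 * n) = 0 := by
        rw [Nat.cast_zero, zero_pow (by omega), div_zero]
      rw [hz0, zero_add] at hz
      have hK : ∀ k : ℕ, ((k : ℂ) + 1) ≠ 0 := fun k => by
        have : (((k + 1 : ℕ)) : ℂ) ≠ 0 := Nat.cast_ne_zero.mpr (Nat.succ_ne_zero k)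
        push_cast at this
        exact this
      have hP : ((π : ℝ) : ℂ) ≠ 0 := Complex.ofReal_ne_zero.mpr hπ.ne'
      have hyx : y ^ (2 * n) = x ^ (2 * n) := by
        rw [hy, pow_mul, sq_abs, ← pow_mul]
      have htermk : ∀ k : ℕ,
          1 / (((k + 1 : ℕ) : ℂ)) ^ (2 * n) * ((x : ℂ) ^ (2 * n) / (π : ℂ) ^ (2 * n))
            = (((y ^ 2 / (((k : ℝ) + 1) ^ 2 * π ^ 2)) ^ n : ℝ) : ℂ) := by
        intro k
        have hreal : (y ^ 2 / (((k : ℝ) + 1) ^ 2 * π ^ 2)) ^ n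
            = x ^ (2 * n) / ((((k : ℝ) + 1)) ^ (2 * n) * π ^ (2 * n)) := by
          rw [div_pow, mul_pow, ← pow_mul, ← pow_mul, ← pow_mul, hyx]
        rw [hreal]
        push_cast
        have hKk := hK k
        field_simp
      rw [if_neg hn]
      push_cast [Complex.ofReal_tsum]
      rw [hz, div_mul_eq_mul_div, mul_div_assoc, tsum_mul_right.symm]
      congr 1
      refine tsum_congr fun k => ?_
      have := (htermk k).symm
      push_cast at this ⊢
      rw [this]
  have hfun : (fun n : ℕ => -2 * (riemannZeta (2 * n) / (π : ℂ) ^ (2 * n) * (x : ℂ) ^ (2 * n)))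
      = fun n : ℕ => (((if n = 0 then (1:ℝ) else
          -2 * ∑' k : ℕ, (y ^ 2 / (((k : ℝ) + 1) ^ 2 * π ^ 2)) ^ n) : ℝ) : ℂ) :=
    funext hterm
  rw [hfun, show (x * Real.cot x) = y * Real.cot y from hcot]
  exact h
end

section
/- For every nonnegative integer d, the multiple zeta value with d entries all equal to 2 satisfies ζ({2}^d) = π^{2d}/(2d+1)! (with ζ({2}^0) := 1). -/
open Real Finset

/-- The multiple zeta value `ζ(s₁,…,s_r) = ∑_{1 ≤ k₁ < ⋯ < k_r} ∏ 1/k_i^{s_i}`,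
encoded via strictly increasing functions `f : Fin r → ℕ` with `k_i = f i + 1`. -/
noncomputable def mzv (s : List ℕ) : ℝ :=
  ∑' f : {f : Fin s.length → ℕ // StrictMono f},
    ∏ i, (1 : ℝ) / ((f.1 i + 1 : ℕ) : ℝ) ^ (s.get i)

/-- `H(a,b) = ζ({2}^a, 3, {2}^b)`. -/
noncomputable def H (a b : ℕ) : ℝ :=
  mzv (List.replicate a 2 ++ 3 :: List.replicate b 2)

namespace MzvAux

open Filter Topology

noncomputable def w (k : ℕ) : ℝ := 1 / ((k : ℝ) + 1) ^ 2

lemma w_nonneg (k : ℕ) : 0 ≤ w k := by unfold w; positivity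

lemma summable_w : Summable w := by
  have h : Summable (fun n : ℕ => 1 / (n : ℝ) ^ 2) :=
    Real.summable_one_div_nat_pow.mpr one_lt_two
  have h2 := (summable_nat_add_iff 1).mpr h
  refine h2.congr fun n => ?_
  unfold w
  push_cast
  norm_num

lemma sum_powerset (c : ℝ) (N : ℕ) :
    ∑ t ∈ (range N).powerset, c ^ t.card * ∏ k ∈ t, w k
      = ∏ n ∈ range N, (1 + c * w n) := by
  calc ∑ t ∈ (range N).powerset, c ^ t.card * ∏ k ∈ t, w k
      = ∑ t ∈ (range N).powerset, (∏ k ∈ t, (c * w k)) * ∏ k ∈ range N \ t, (1:ℝ) := by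
        refine Finset.sum_congr rfl fun t _ => ?_
        simp [Finset.prod_mul_distrib]
    _ = ∏ n ∈ range N, (c * w n + 1) := (Finset.prod_add _ _ _).symm
    _ = ∏ n ∈ range N, (1 + c * w n) := by simp [add_comm]

noncomputable def A (d : ℕ) : ℝ := ∑' t : {t : Finset ℕ // t.card = d}, ∏ k ∈ t.1, w k

lemma A_nonneg (d : ℕ) : 0 ≤ A d :=
  tsum_nonneg fun t => Finset.prod_nonneg fun k _ => w_nonneg k

noncomputable def g (x : ℝ) (t : Finset ℕ) : ℝ := (-(x ^ 2)) ^ t.card * ∏ k ∈ t, w k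

lemma summable_gabs (x : ℝ) :
    Summable (fun t : Finset ℕ => (x ^ 2) ^ t.card * ∏ k ∈ t, w k) := by
  apply summable_of_sum_le (c := Real.exp (x ^ 2 * ∑' n, w n))
  · intro t
    exact mul_nonneg (pow_nonneg (sq_nonneg x) _)
      (Finset.prod_nonneg fun k _ => w_nonneg k)
  · intro u
    set N := u.sup fun t => t.sup (· + 1) with hN
    have hsub : u ⊆ (range N).powerset := by
      intro t ht
      simp only [Finset.mem_powerset]
      intro k hk
      simp only [Finset.mem_range]
      calc k < k + 1 := Nat.lt_succ_self k
        _ ≤ t.sup (· + 1) := Finset.le_sup hk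
        _ ≤ N := Finset.le_sup ht
    calc ∑ t ∈ u, (x ^ 2) ^ t.card * ∏ k ∈ t, w k
        ≤ ∑ t ∈ (range N).powerset, (x ^ 2) ^ t.card * ∏ k ∈ t, w k := by
          refine Finset.sum_le_sum_of_subset_of_nonneg hsub fun t _ _ => ?_
          exact mul_nonneg (pow_nonneg (sq_nonneg x) _)
            (Finset.prod_nonneg fun k _ => w_nonneg k)
      _ = ∏ n ∈ range N, (1 + x ^ 2 * w n) := sum_powerset _ _
      _ ≤ ∏ n ∈ range N, Real.exp (x ^ 2 * w n) := by
          refine Finset.prod_le_prod (fun n _ => by nlinarith [w_nonneg n, sq_nonneg x]) fun n _ => ?_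
          have := Real.add_one_le_exp (x ^ 2 * w n)
          linarith
      _ = Real.exp (∑ n ∈ range N, x ^ 2 * w n) := (Real.exp_sum _ _).symm
      _ ≤ Real.exp (x ^ 2 * ∑' n, w n) := by
          apply Real.exp_le_exp.mpr
          rw [← tsum_mul_left]
          exact Summable.sum_le_tsum (range N) (fun n _ => mul_nonneg (sq_nonneg x) (w_nonneg n))
            (summable_w.mul_left _)

lemma summable_g (x : ℝ) : Summable (g x) := by
  apply Summable.of_abs
  refine (summable_gabs x).congr fun t => ?_
  rw [g, abs_mul, abs_pow, abs_neg, abs_of_nonneg (sq_nonneg x),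
    abs_of_nonneg (Finset.prod_nonneg fun k _ => w_nonneg k)]
lemma tsum_g_eq (x : ℝ) (hx : π * x ≠ 0) :
    ∑' t, g x t = Real.sin (π * x) / (π * x) := by
  have hmono : Monotone (fun N : ℕ => (range N).powerset) := fun a b h =>
    Finset.powerset_mono.mpr (Finset.range_subset_range.mpr h)
  have hcov : ∀ t : Finset ℕ, ∃ N : ℕ, t ∈ (range N).powerset := by
    intro t
    refine ⟨t.sup (· + 1), ?_⟩
    simp only [Finset.mem_powerset]
    intro k hk
    simp only [Finset.mem_range]
    exact Nat.lt_of_lt_of_le (Nat.lt_succ_self k) (Finset.le_sup hk)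
  have htt : Tendsto (fun N : ℕ => (range N).powerset) atTop atTop :=
    tendsto_atTop_finset_of_monotone hmono hcov
  have h1 : Tendsto (fun N : ℕ => ∑ t ∈ (range N).powerset, g x t) atTop
      (𝓝 (∑' t, g x t)) := ((summable_g x).hasSum).comp htt
  have h1' : Tendsto (fun N : ℕ => π * x * ∑ t ∈ (range N).powerset, g x t) atTop
      (𝓝 (π * x * ∑' t, g x t)) := h1.const_mul (π * x)
  have h2 : Tendsto (fun N : ℕ => π * x * ∑ t ∈ (range N).powerset, g x t) atTop
      (𝓝 (Real.sin (π * x))) := by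
    refine (Real.tendsto_euler_sin_prod x).congr fun N => ?_
    congr 1
    rw [show (fun t : Finset ℕ => g x t) = fun t => (-(x ^ 2)) ^ t.card * ∏ k ∈ t, w k from rfl]
    rw [sum_powerset (-(x ^ 2)) N]
    refine Finset.prod_congr rfl fun n _ => ?_
    unfold w
    ring
  have := tendsto_nhds_unique h1' h2
  rw [eq_div_iff hx, ← this]
  ring

lemma tsum_g_sigma (x : ℝ) :
    ∑' t, g x t = ∑' d : ℕ, (-(x ^ 2)) ^ d * A d := by
  have e : (Σ d : ℕ, {t : Finset ℕ // t.card = d}) ≃ Finset ℕ :=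
    Equiv.sigmaFiberEquiv Finset.card
  rw [← (Equiv.sigmaFiberEquiv (Finset.card (α := ℕ))).tsum_eq (g x)]
  have hsum : Summable fun p : Σ d : ℕ, {t : Finset ℕ // t.card = d} =>
      g x ((Equiv.sigmaFiberEquiv (Finset.card (α := ℕ))) p) :=
    (summable_g x).comp_injective (Equiv.sigmaFiberEquiv _).injective
  rw [Summable.tsum_sigma hsum]
  refine tsum_congr fun d => ?_
  rw [A, ← tsum_mul_left]
  refine tsum_congr fun t => ?_
  show g x t.1 = _
  rw [g, t.2]

lemma summable_A_mul (x : ℝ) : Summable (fun d : ℕ => (x ^ 2) ^ d * A d) := by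
  have hsum : Summable fun p : Σ d : ℕ, {t : Finset ℕ // t.card = d} =>
      (x ^ 2) ^ p.2.1.card * ∏ k ∈ p.2.1, w k :=
    (summable_gabs x).comp_injective (Equiv.sigmaFiberEquiv (Finset.card (α := ℕ))).injective
  have h2 := hsum.sigma
  refine h2.congr fun d => ?_
  calc ∑' t : {t : Finset ℕ // t.card = d}, (x ^ 2) ^ t.1.card * ∏ k ∈ t.1, w k
      = ∑' t : {t : Finset ℕ // t.card = d}, (x ^ 2) ^ d * ∏ k ∈ t.1, w k :=
        tsum_congr fun t => by rw [t.2]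
    _ = (x ^ 2) ^ d * A d := by rw [A, tsum_mul_left]

noncomputable def T (d : ℕ) : ℝ := π ^ (2 * d) / (Nat.factorial (2 * d + 1) : ℝ)

lemma T_nonneg (d : ℕ) : 0 ≤ T d := by
  unfold T
  positivity

lemma hasSum_T (x : ℝ) (hx : π * x ≠ 0) :
    HasSum (fun d : ℕ => (-(x ^ 2)) ^ d * T d) (Real.sin (π * x) / (π * x)) := by
  have h := (Real.hasSum_sin (π * x)).div_const (π * x)
  have heq : (fun d : ℕ => (-(x ^ 2)) ^ d * T d)
      = fun d : ℕ => (-1) ^ d * (π * x) ^ (2 * d + 1) / ((2 * d + 1).factorial : ℝ) / (π * x) := by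
    funext d
    have hfac : ((2 * d + 1).factorial : ℝ) ≠ 0 := Nat.cast_ne_zero.mpr (Nat.factorial_ne_zero _)
    rw [T, pow_succ, mul_pow, neg_pow, pow_mul]
    field_simp
    have hx0 : x ≠ 0 := right_ne_zero_of_mul hx
    calc _ = x * x⁻¹ * (x ^ (d * 2) * π * π ^ (d * 2)) := by rw [mul_inv_cancel₀ hx0, one_mul]; ring
      _ = _ := by ring
  rw [heq]
  exact h
lemma summable_shift_pow {c : ℕ → ℝ} {y : ℝ} (hy : y ≠ 0)
    (h : Summable fun k => c k * y ^ k) (m : ℕ) :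
    Summable fun j => c (j + m) * y ^ j := by
  have h1 : Summable fun j => c (j + m) * y ^ (j + m) := (summable_nat_add_iff m).mpr h
  have h2 := h1.mul_right ((y ^ m)⁻¹)
  refine h2.congr fun j => ?_
  rw [pow_add]
  field_simp

lemma coeff_extract (v : ℕ → ℝ)
    (hs : ∀ y : ℝ, 0 < y → y < 1 → Summable (fun d => |v d| * y ^ d))
    (h0 : ∀ y : ℝ, 0 < y → y < 1 → ∑' d : ℕ, v d * y ^ d = 0) :
    ∀ d, v d = 0 := by
  intro d
  induction d using Nat.strong_induction_on with
  | _ d ih =>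
  have hhalf : (0:ℝ) < 1/2 := by norm_num
  have hhalf1 : (1:ℝ)/2 < 1 := by norm_num
  set C : ℝ := ∑' j : ℕ, |v (j + (d + 1))| * (1 / 2 : ℝ) ^ j with hC
  have hCsum : Summable fun j : ℕ => |v (j + (d + 1))| * (1 / 2 : ℝ) ^ j :=
    summable_shift_pow (by norm_num) (hs (1/2) hhalf hhalf1) (d + 1)
  have key : ∀ y : ℝ, 0 < y → y ≤ 1/2 → |v d| ≤ C * y := by
    intro y hy0 hy2
    have hy1 : y < 1 := lt_of_le_of_lt hy2 (by norm_num)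
    have hyne : y ≠ 0 := ne_of_gt hy0
    have hsabs : Summable fun k => |v k| * y ^ k := hs y hy0 hy1
    have hsv : Summable fun k => v k * y ^ k := by
      apply Summable.of_abs
      refine hsabs.congr fun k => ?_
      rw [abs_mul, abs_of_nonneg (pow_nonneg hy0.le k)]
    have h2 := Summable.sum_add_tsum_nat_add d hsv
    rw [h0 y hy0 hy1] at h2
    have hz : ∑ i ∈ range d, v i * y ^ i = 0 :=
      Finset.sum_eq_zero fun i hi => by rw [ih i (Finset.mem_range.mp hi)]; ring
    rw [hz, zero_add] at h2
    have h4 : (fun j : ℕ => v (j + d) * y ^ (j + d))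
        = fun j => y ^ d * (v (j + d) * y ^ j) := funext fun j => by rw [pow_add]; ring
    rw [h4, tsum_mul_left] at h2
    have h5 : ∑' j : ℕ, v (j + d) * y ^ j = 0 := by
      rcases mul_eq_zero.mp h2 with h | h
      · exact absurd h (pow_ne_zero d hyne)
      · exact h
    have hsv' : Summable fun j : ℕ => v (j + d) * y ^ j := summable_shift_pow hyne hsv d
    have h6 := Summable.tsum_eq_zero_add hsv'
    rw [h5] at h6
    have h7 : v d = - ∑' j : ℕ, v (j + 1 + d) * y ^ (j + 1) := by
      have : v (0 + d) * y ^ 0 = v d := by simp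
      linarith [h6, this]
    have hs1 : Summable fun j : ℕ => |v (j + 1 + d)| * y ^ (j + 1) := by
      have := summable_shift_pow hyne hsabs (d + 1)
      have h8 := this.mul_right y
      refine h8.congr fun j => ?_
      rw [show j + (d + 1) = j + 1 + d by omega, pow_succ]
      ring
    have habs : |v d| ≤ ∑' j : ℕ, |v (j + 1 + d)| * y ^ (j + 1) := by
      rw [h7, abs_neg]
      calc |∑' j : ℕ, v (j + 1 + d) * y ^ (j + 1)|
          ≤ ∑' j : ℕ, |v (j + 1 + d)| * |y| ^ (j + 1) := by
            have hsv2 : Summable fun j : ℕ => ‖v (j + 1 + d) * y ^ (j + 1)‖ := by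
              refine hs1.congr fun j => ?_
              rw [norm_mul, Real.norm_eq_abs, Real.norm_eq_abs,
                abs_of_nonneg (pow_nonneg hy0.le _)]
            simpa using norm_tsum_le_tsum_norm hsv2
        _ = ∑' j : ℕ, |v (j + 1 + d)| * y ^ (j + 1) := by
            refine tsum_congr fun j => ?_
            rw [abs_of_pos hy0]
    have hcomp : ∑' j : ℕ, |v (j + 1 + d)| * y ^ (j + 1) ≤ C * y := by
      have hterm : ∀ j : ℕ, |v (j + 1 + d)| * y ^ (j + 1)
          ≤ (|v (j + (d + 1))| * (1 / 2 : ℝ) ^ j) * y := by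
        intro j
        rw [show j + (d + 1) = j + 1 + d by omega, pow_succ]
        have hpow : y ^ j ≤ (1 / 2 : ℝ) ^ j := pow_le_pow_left₀ hy0.le hy2 j
        have hnn := abs_nonneg (v (j + 1 + d))
        have h1 : |v (j + 1 + d)| * y ^ j ≤ |v (j + 1 + d)| * (1 / 2 : ℝ) ^ j :=
          mul_le_mul_of_nonneg_left hpow hnn
        rw [← mul_assoc]
        exact mul_le_mul_of_nonneg_right h1 hy0.le
      calc ∑' j : ℕ, |v (j + 1 + d)| * y ^ (j + 1)
          ≤ ∑' j : ℕ, (|v (j + (d + 1))| * (1 / 2 : ℝ) ^ j) * y :=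
            Summable.tsum_le_tsum hterm hs1 (hCsum.mul_right y)
        _ = C * y := by rw [tsum_mul_right]
    linarith
  have hC0 : 0 ≤ C :=
    tsum_nonneg fun j => mul_nonneg (abs_nonneg _) (by positivity)
  have hlim : Tendsto (fun n : ℕ => C * (1 / ((n : ℝ) + 2))) atTop (𝓝 0) := by
    have h1 : Tendsto (fun n : ℕ => ((n : ℝ) + 2)) atTop atTop :=
      tendsto_atTop_add_const_right atTop 2 tendsto_natCast_atTop_atTop
    have h2 : Tendsto (fun n : ℕ => 1 / ((n : ℝ) + 2)) atTop (𝓝 0) := by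
      rw [show (fun n : ℕ => 1 / ((n : ℝ) + 2)) = fun n : ℕ => ((n : ℝ) + 2)⁻¹ from funext fun n => one_div _]
      exact h1.inv_tendsto_atTop
    have := h2.const_mul C
    simpa using this
  have hub : ∀ n : ℕ, |v d| ≤ C * (1 / ((n : ℝ) + 2)) := by
    intro n
    refine key _ (by positivity) ?_
    rw [div_le_div_iff₀ (by positivity) (by norm_num)]
    have : (0:ℝ) ≤ (n : ℝ) := Nat.cast_nonneg n
    linarith
  have : |v d| ≤ 0 := ge_of_tendsto hlim (Filter.Eventually.of_forall hub)
  exact abs_eq_zero.mp (le_antisymm this (abs_nonneg _))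
theorem A_eq_T (d : ℕ) : A d = T d := by
  have hv := coeff_extract (fun d => (-1 : ℝ) ^ d * (A d - T d))
    (by
      intro y hy0 hy1
      set x := Real.sqrt y with hxdef
      have hx2 : x ^ 2 = y := Real.sq_sqrt hy0.le
      have hx0 : 0 < x := Real.sqrt_pos.mpr hy0
      have hπ : π * x ≠ 0 := ne_of_gt (mul_pos Real.pi_pos hx0)
      have hA : Summable fun d : ℕ => y ^ d * A d := by
        have := summable_A_mul x
        rwa [hx2] at this
      have hT : Summable fun d : ℕ => y ^ d * T d := by
        have := (hasSum_T x hπ).summable.abs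
        refine this.congr fun d => ?_
        rw [abs_mul, abs_pow, abs_neg, abs_of_nonneg (sq_nonneg x),
          abs_of_nonneg (T_nonneg d), hx2]
      refine Summable.of_nonneg_of_le
        (fun d => mul_nonneg (abs_nonneg _) (pow_nonneg hy0.le d))
        (fun d => ?_) (hA.add hT)
      have h1 : |(-1 : ℝ) ^ d * (A d - T d)| ≤ A d + T d := by
        rw [abs_mul, abs_pow, abs_neg, abs_one, one_pow, one_mul]
        have := abs_sub (A d) (T d)
        rw [abs_of_nonneg (A_nonneg d), abs_of_nonneg (T_nonneg d)] at this
        exact this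
      calc |(-1 : ℝ) ^ d * (A d - T d)| * y ^ d
          ≤ (A d + T d) * y ^ d :=
            mul_le_mul_of_nonneg_right h1 (pow_nonneg hy0.le d)
        _ = y ^ d * A d + y ^ d * T d := by ring)
    (by
      intro y hy0 hy1
      set x := Real.sqrt y with hxdef
      have hx2 : x ^ 2 = y := Real.sq_sqrt hy0.le
      have hx0 : 0 < x := Real.sqrt_pos.mpr hy0
      have hπ : π * x ≠ 0 := ne_of_gt (mul_pos Real.pi_pos hx0)
      have hA' : Summable fun d : ℕ => (-(x ^ 2)) ^ d * A d := by
        apply Summable.of_abs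
        refine (summable_A_mul x).congr fun d => ?_
        rw [abs_mul, abs_pow, abs_neg, abs_of_nonneg (sq_nonneg x),
          abs_of_nonneg (A_nonneg d)]
      have hTsum := hasSum_T x hπ
      have e1 : ∑' d : ℕ, (-(x ^ 2)) ^ d * A d = Real.sin (π * x) / (π * x) := by
        rw [← tsum_g_sigma x, tsum_g_eq x hπ]
      calc ∑' d : ℕ, (-1 : ℝ) ^ d * (A d - T d) * y ^ d
          = ∑' d : ℕ, ((-(x ^ 2)) ^ d * A d - (-(x ^ 2)) ^ d * T d) := by
            refine tsum_congr fun d => ?_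
            rw [← hx2, neg_pow]
            ring
        _ = (∑' d : ℕ, (-(x ^ 2)) ^ d * A d) - ∑' d : ℕ, (-(x ^ 2)) ^ d * T d :=
            Summable.tsum_sub hA' hTsum.summable
        _ = 0 := by rw [e1, hTsum.tsum_eq, sub_self])
  have h := hv d
  have hne : ((-1 : ℝ) ^ d) ≠ 0 := by
    intro hcontra
    have := pow_eq_zero_iff (n := d) (by
      rintro rfl
      simp at hcontra) |>.mp hcontra
    norm_num at this
  rcases mul_eq_zero.mp h with h' | h'
  · exact absurd h' hne
  · linarith [h']
def finsetStrictMonoEquiv (k : ℕ) :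
    {t : Finset ℕ // t.card = k} ≃ {f : Fin k → ℕ // StrictMono f} where
  toFun t := ⟨t.1.orderEmbOfFin t.2, (t.1.orderEmbOfFin t.2).strictMono⟩
  invFun f := ⟨Finset.univ.image f.1, by
    rw [Finset.card_image_of_injective _ f.2.injective, Finset.card_univ, Fintype.card_fin]⟩
  left_inv t := by
    apply Subtype.ext
    apply Finset.eq_of_subset_of_card_le
    · intro m hm
      rcases Finset.mem_image.mp hm with ⟨i, _, rfl⟩
      exact Finset.orderEmbOfFin_mem _ _ _
    · rw [Finset.card_image_of_injective _ (t.1.orderEmbOfFin t.2).injective,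
        Finset.card_univ, Fintype.card_fin, t.2]
  right_inv f := by
    apply Subtype.ext
    exact (Finset.orderEmbOfFin_unique _
      (fun i => Finset.mem_image_of_mem _ (Finset.mem_univ i)) f.2).symm

lemma image_orderEmbOfFin (s : Finset ℕ) {k : ℕ} (h : s.card = k) :
    Finset.univ.image (s.orderEmbOfFin h) = s := by
  apply Finset.eq_of_subset_of_card_le
  · intro m hm
    rcases Finset.mem_image.mp hm with ⟨i, _, rfl⟩
    exact Finset.orderEmbOfFin_mem _ _ _
  · rw [Finset.card_image_of_injective _ (s.orderEmbOfFin h).injective,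
      Finset.card_univ, Fintype.card_fin, h]

lemma tsum_strictMono (k : ℕ) :
    ∑' f : {f : Fin k → ℕ // StrictMono f}, (∏ i : Fin k, w (f.1 i)) = A k := by
  rw [A, ← (finsetStrictMonoEquiv k).tsum_eq (fun f : {f : Fin k → ℕ // StrictMono f} =>
    ∏ i : Fin k, w (f.1 i))]
  refine tsum_congr fun t => ?_
  show ∏ i : Fin k, w (t.1.orderEmbOfFin t.2 i) = ∏ m ∈ t.1, w m
  conv_rhs => rw [← image_orderEmbOfFin t.1 t.2]
  rw [Finset.prod_image fun i _ j _ hij => (t.1.orderEmbOfFin t.2).injective hij]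

lemma mzv_replicate_eq_A (d : ℕ) : mzv (List.replicate d 2) = A d := by
  rw [mzv]
  have h1 : ∀ f : {f : Fin (List.replicate d 2).length → ℕ // StrictMono f},
      (∏ i, (1 : ℝ) / ((f.1 i + 1 : ℕ) : ℝ) ^ ((List.replicate d 2).get i))
        = ∏ i, w (f.1 i) := by
    intro f
    refine Finset.prod_congr rfl fun i _ => ?_
    rw [List.get_eq_getElem, List.getElem_replicate, w]
    push_cast
    ring
  rw [tsum_congr h1, tsum_strictMono]
  rw [List.length_replicate]

end MzvAux

/-- `ζ({2}^d) = π^{2d}/(2d+1)!`. -/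
theorem mzv_two_rep (d : ℕ) :
    mzv (List.replicate d 2) = π ^ (2 * d) / (Nat.factorial (2 * d + 1) : ℝ) := by
  rw [MzvAux.mzv_replicate_eq_A, MzvAux.A_eq_T, MzvAux.T]
end

section
/- For every nonnegative integer n, the multiple t-value with n entries all equal to 2 satisfies t({2}^n) = π^{2n}/(2^{2n} (2n)!) (with t({2}^0) := 1). -/
open Real Finset Filter

/-- The multiple t-value `t(s₁,…,s_r) = ∑_{1 ≤ k₁ < ⋯ < k_r} ∏ 1/(2k_i-1)^{s_i}`,
encoded via strictly increasing functions `f : Fin r → ℕ` with `k_i = f i + 1`,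
so `2k_i - 1 = 2 f i + 1`. -/
noncomputable def mtv (s : List ℕ) : ℝ :=
  ∑' f : {f : Fin s.length → ℕ // StrictMono f},
    ∏ i, (1 : ℝ) / ((2 * f.1 i + 1 : ℕ) : ℝ) ^ (s.get i)

/-- `T(a,b) = t({2}^a, 3, {2}^b)`. -/
noncomputable def T (a b : ℕ) : ℝ :=
  mtv (List.replicate a 2 ++ 3 :: List.replicate b 2)

namespace MtvAux

/-- `a k = 1/(2k+1)^2` -/
noncomputable def aa (k : ℕ) : ℝ := (1 : ℝ) / ((2 * k + 1 : ℕ) : ℝ) ^ 2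

lemma aa_nonneg (k : ℕ) : 0 ≤ aa k := div_nonneg zero_le_one (by positivity)

/-- elementary symmetric series -/
noncomputable def ee (n : ℕ) : ℝ :=
  ∑' f : {f : Fin n → ℕ // StrictMono f}, ∏ i, aa (f.1 i)

/-- power sums -/
noncomputable def pp (i : ℕ) : ℝ := ∑' k, aa k ^ i

/-- zeta values -/
noncomputable def Z (i : ℕ) : ℝ :=
  (-1 : ℝ) ^ (i + 1) * 2 ^ (2 * i - 1) * π ^ (2 * i) * (bernoulli (2 * i) : ℝ) /
    ((2 * i).factorial : ℝ)

lemma hasSum_aa_pow {i : ℕ} (hi : i ≠ 0) :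
    HasSum (fun k => aa k ^ i) ((1 - (1 / 4) ^ i) * Z i) := by
  have h : HasSum (fun n : ℕ => 1 / (n : ℝ) ^ (2 * i)) (Z i) := hasSum_zeta_nat hi
  have he : HasSum (fun k : ℕ => 1 / ((2 * k : ℕ) : ℝ) ^ (2 * i)) ((1 / 4) ^ i * Z i) := by
    have := h.mul_left ((1 / 4 : ℝ) ^ i)
    refine this.congr_fun fun k => ?_
    rcases Nat.eq_zero_or_pos k with rfl | hk
    · simp [zero_pow (by omega : 2 * i ≠ 0)]
    · have hk' : ((k:ℝ)) ^ (2*i) ≠ 0 := by positivity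
      push_cast
      rw [mul_pow, div_pow, one_pow, div_mul_div_comm, one_mul, pow_mul]
      norm_num
  have hodd : Summable (fun k : ℕ => 1 / ((2 * k + 1 : ℕ) : ℝ) ^ (2 * i)) := by
    have := h.summable.comp_injective (fun a b hab => by simpa using hab : Function.Injective (fun k : ℕ => 2 * k + 1))
    simpa [Function.comp_def] using this
  obtain ⟨b, hb⟩ := hodd
  have htot := HasSum.even_add_odd (f := fun n : ℕ => 1 / (n : ℝ) ^ (2 * i))
    (by exact_mod_cast he) (by exact_mod_cast hb)
  have hbz : b = (1 - (1 / 4) ^ i) * Z i := by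
    have := h.unique htot; linarith
  rw [← hbz]
  refine hb.congr_fun fun k => ?_
  rw [aa, div_pow, one_pow, ← pow_mul, mul_comm 2 i, ← mul_comm 2 i]


lemma pp_eq {i : ℕ} (hi : i ≠ 0) : pp i = (1 - (1 / 4) ^ i) * Z i :=
  (hasSum_aa_pow hi).tsum_eq

lemma summable_aa : Summable aa := by
  have := (hasSum_aa_pow one_ne_zero).summable
  simpa using this

lemma summable_pi (n : ℕ) : Summable (fun g : Fin n → ℕ => ∏ i, aa (g i)) := by
  induction n with
  | zero => exact .of_finite
  | succ n ih =>
    have hf' : 0 ≤ aa := fun k => aa_nonneg k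
    have hg' : 0 ≤ (fun g : Fin n → ℕ => ∏ i, aa (g i)) :=
      fun g => Finset.prod_nonneg fun i _ => aa_nonneg _
    have h2 := Summable.mul_of_nonneg summable_aa ih hf' hg'
    have := h2.comp_injective (Fin.consEquiv fun _ => ℕ).symm.injective
    refine this.congr fun g => ?_
    simp [Function.comp, Fin.consEquiv, Fin.prod_univ_succ, Fin.tail]

lemma summable_ee (n : ℕ) :
    Summable (fun f : {f : Fin n → ℕ // StrictMono f} => ∏ i, aa (f.1 i)) :=
  (summable_pi n).comp_injective Subtype.val_injective

/-- finite elementary symmetric sums -/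
noncomputable def EN (N n : ℕ) : ℝ := ∑ s ∈ powersetCard n (range N), ∏ k ∈ s, aa k

/-- finite power sums -/
noncomputable def PN (N i : ℕ) : ℝ := ∑ k ∈ range N, aa k ^ i

/-- the strictly monotone enumeration of a finset of card `n` -/
noncomputable def emb {n : ℕ} (s : Finset ℕ) (h : s.card = n) : {f : Fin n → ℕ // StrictMono f} :=
  ⟨fun i => s.orderEmbOfFin h i, (s.orderEmbOfFin h).strictMono⟩

lemma emb_val_mem {n : ℕ} (s : Finset ℕ) (h : s.card = n) (i : Fin n) :
    (emb s h).1 i ∈ s := Finset.orderEmbOfFin_mem s h i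

lemma emb_inj {n : ℕ} {s s' : Finset ℕ} {h : s.card = n} {h' : s'.card = n}
    (he : emb s h = emb s' h') : s = s' := by
  have h1 : Set.range (emb s h).1 = (s : Set ℕ) := Finset.range_orderEmbOfFin s h
  have h2 : Set.range (emb s' h').1 = (s' : Set ℕ) := Finset.range_orderEmbOfFin s' h'
  rw [he] at h1
  exact Finset.coe_injective (h1 ▸ h2)

lemma emb_eq_of {n : ℕ} (s : Finset ℕ) (h : s.card = n) (f : {f : Fin n → ℕ // StrictMono f})
    (hf : ∀ i, f.1 i ∈ s) : emb s h = f := by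
  refine Subtype.ext ?_
  exact (Finset.orderEmbOfFin_unique h hf f.2).symm

noncomputable def TNset (n N : ℕ) : Finset {f : Fin n → ℕ // StrictMono f} := by
  classical
  exact (powersetCard n (range N)).attach.image
    (fun s => emb s.1 (Finset.mem_powersetCard.mp s.2).2)

lemma mem_TNset {n N : ℕ} (f : {f : Fin n → ℕ // StrictMono f}) :
    f ∈ TNset n N ↔ ∀ i, f.1 i < N := by
  classical
  constructor
  · intro hf i
    rw [TNset, Finset.mem_image] at hf
    obtain ⟨s, _, rfl⟩ := hf
    have := emb_val_mem s.1 (Finset.mem_powersetCard.mp s.2).2 i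
    have hsub := (Finset.mem_powersetCard.mp s.2).1
    exact Finset.mem_range.mp (hsub this)
  · intro hi
    rw [TNset, Finset.mem_image]
    have hinj := f.2.injective
    set s : Finset ℕ := Finset.image f.1 Finset.univ with hs
    have hcard : s.card = n := by
      rw [hs, Finset.card_image_of_injective _ hinj, Finset.card_univ, Fintype.card_fin]
    have hmem : s ∈ powersetCard n (range N) := by
      rw [Finset.mem_powersetCard]
      refine ⟨fun x hx => ?_, hcard⟩
      rw [hs, Finset.mem_image] at hx
      obtain ⟨i, _, rfl⟩ := hx
      exact Finset.mem_range.mpr (hi i)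
    refine ⟨⟨s, hmem⟩, Finset.mem_attach _ _, ?_⟩
    exact emb_eq_of s hcard f (fun i => Finset.mem_image_of_mem _ (Finset.mem_univ i))

lemma prod_emb {n : ℕ} (s : Finset ℕ) (h : s.card = n) :
    (∏ i, aa ((emb s h).1 i)) = ∏ k ∈ s, aa k := by
  rw [← Finset.prod_coe_sort s aa]
  rw [← Equiv.prod_comp (s.orderIsoOfFin h).toEquiv (fun x : ↥s => aa x)]
  rfl

lemma sum_TNset (n N : ℕ) :
    ∑ f ∈ TNset n N, (∏ i, aa (f.1 i)) = EN N n := by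
  classical
  rw [TNset, Finset.sum_image (by
    intro s _ s' _ he
    exact Subtype.ext (emb_inj he))]
  rw [EN, ← Finset.sum_attach (powersetCard n (range N)) (fun s => ∏ k ∈ s, aa k)]
  exact Finset.sum_congr rfl fun s _ => prod_emb s.1 _

lemma tendsto_EN (n : ℕ) :
    Filter.Tendsto (fun N => EN N n) Filter.atTop (nhds (ee n)) := by
  have hs := (summable_ee n).hasSum
  have hmono : Monotone (TNset n) := by
    intro N M hNM f hf
    rw [mem_TNset] at hf ⊢
    exact fun i => lt_of_lt_of_le (hf i) hNM
  have hexh : ∀ f : {f : Fin n → ℕ // StrictMono f}, ∃ N, f ∈ TNset n N := by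
    intro f
    refine ⟨(∑ i, f.1 i) + 1, (mem_TNset f).mpr fun i => ?_⟩
    have : f.1 i ≤ ∑ j, f.1 j := Finset.single_le_sum (fun j _ => Nat.zero_le _) (Finset.mem_univ i)
    omega
  have := hs.comp (Filter.tendsto_atTop_finset_of_monotone hmono hexh)
  refine this.congr fun N => sum_TNset n N

lemma tendsto_PN {i : ℕ} (hi : i ≠ 0) :
    Filter.Tendsto (fun N => PN N i) Filter.atTop (nhds (pp i)) :=
  (hasSum_aa_pow hi).summable.hasSum.tendsto_sum_nat

lemma newton_finite (N n : ℕ) :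
    (n : ℝ) * EN N n =
      (-1) ^ (n + 1) * ∑ a ∈ (antidiagonal n).filter (fun a => a.1 < n),
        (-1 : ℝ) ^ a.1 * EN N a.1 * PN N a.2 := by
  open MvPolynomial in
  have key := congrArg (MvPolynomial.aeval (fun j : Fin N => aa j))
    (MvPolynomial.mul_esymm_eq_sum (Fin N) ℝ n)
  have haes : ∀ m : ℕ, MvPolynomial.aeval (fun j : Fin N => aa j) (esymm (Fin N) ℝ m) = EN N m := by
    intro m
    rw [esymm, map_sum]
    rw [EN]
    rw [show range N = (univ : Finset (Fin N)).map Fin.valEmbedding by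
      rw [Fin.map_valEmbedding_univ]; ext x; simp]
    rw [Finset.powersetCard_map, Finset.sum_map]
    refine Finset.sum_congr rfl fun s _ => ?_
    have : ∏ k ∈ (mapEmbedding Fin.valEmbedding).toEmbedding s, aa k
        = ∏ k ∈ s.map Fin.valEmbedding, aa k := rfl
    rw [map_prod, this, Finset.prod_map s Fin.valEmbedding aa]
    refine Finset.prod_congr rfl fun j _ => ?_
    simp
  have hps : ∀ m : ℕ, MvPolynomial.aeval (fun j : Fin N => aa j) (psum (Fin N) ℝ m) = PN N m := by
    intro m
    rw [psum, map_sum, PN, ← Fin.sum_univ_eq_sum_range (fun k => aa k ^ m)]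
    refine Finset.sum_congr rfl fun j _ => ?_
    simp
  simp only [map_mul, map_sum, map_pow, map_neg, map_one, map_natCast, haes, hps] at key
  exact key

lemma newton_ee (n : ℕ) :
    (n : ℝ) * ee n =
      (-1) ^ (n + 1) * ∑ a ∈ (antidiagonal n).filter (fun a => a.1 < n),
        (-1 : ℝ) ^ a.1 * ee a.1 * pp a.2 := by
  have hL : Filter.Tendsto (fun N => (n : ℝ) * EN N n) Filter.atTop (nhds ((n : ℝ) * ee n)) :=
    (tendsto_EN n).const_mul _
  have hR : Filter.Tendsto
      (fun N => (-1 : ℝ) ^ (n + 1) * ∑ a ∈ (antidiagonal n).filter (fun a => a.1 < n),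
        (-1 : ℝ) ^ a.1 * EN N a.1 * PN N a.2) Filter.atTop
      (nhds ((-1 : ℝ) ^ (n + 1) * ∑ a ∈ (antidiagonal n).filter (fun a => a.1 < n),
        (-1 : ℝ) ^ a.1 * ee a.1 * pp a.2)) := by
    refine Filter.Tendsto.const_mul _ (tendsto_finset_sum _ fun a ha => ?_)
    simp only [mem_filter, Finset.HasAntidiagonal.mem_antidiagonal] at ha
    have ha2 : a.2 ≠ 0 := by omega
    exact ((tendsto_EN a.1).const_mul ((-1 : ℝ) ^ a.1)).mul (tendsto_PN ha2)
  exact tendsto_nhds_unique (hL.congr fun N => newton_finite N n) hR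

/-- the closed form -/
noncomputable def cc (n : ℕ) : ℝ := π ^ (2 * n) / (4 ^ n * ((2 * n).factorial : ℝ))

section PS
open PowerSeries

noncomputable def E (q : ℚ) : PowerSeries ℚ := rescale q (exp ℚ)

lemma E_mul (a b : ℚ) : E a * E b = E (a + b) := exp_mul_exp_eq_exp_add a b

lemma E_zero : E 0 = 1 := by
  rw [E, rescale_zero]
  simp

lemma E_sub_one_ne_zero {a : ℚ} (ha : a ≠ 0) : E a - 1 ≠ 0 := by
  intro h
  have := congrArg (coeff 1) h
  rw [map_sub, E, coeff_rescale, coeff_exp] at this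
  simp [Nat.factorial] at this
  exact ha this

noncomputable def BB : PowerSeries ℚ := bernoulliPowerSeries ℚ

lemma BB_mul (t : ℚ) : rescale t BB * (E t - 1) = C t * X := by
  have h := congrArg (rescale t) (bernoulliPowerSeries_mul_exp_sub_one ℚ)
  rw [map_mul, map_sub, map_one, rescale_X] at h
  exact h

lemma main_series :
    rescale 4 BB * E 1 + rescale (-4) BB * E (-1) =
      rescale 2 BB * E 1 + rescale (-2) BB * E (-1) := by
  have hdom : (∀ a : ℚ, a ≠ 0 → (E a - 1) ≠ 0) := fun a => E_sub_one_ne_zero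
  set u := E 1 with hu
  set v := E (-1) with hv
  have huv : u * v = 1 := by rw [hu, hv, E_mul]; norm_num [E_zero]
  have hu2 : E 2 = u ^ 2 := by rw [hu, pow_two, E_mul]; norm_num
  have hC : ∀ t : ℚ, (C t * X : PowerSeries ℚ) = C t * X := fun _ => rfl
  have hu4 : E 4 = u ^ 4 := by
    rw [hu, show (4:ℚ) = 1 + 1 + 1 + 1 by norm_num, ← E_mul, ← E_mul, ← E_mul]; ring
  have hv2 : E (-2) = v ^ 2 := by rw [hv, pow_two, E_mul]; norm_num
  have hv4 : E (-4) = v ^ 4 := by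
    rw [hv, show (-4:ℚ) = -1 + -1 + -1 + -1 by norm_num, ← E_mul, ← E_mul, ← E_mul]; ring
  have h4 : rescale 4 BB * (u ^ 4 - 1) = 4 * X := by
    rw [← hu4, BB_mul, map_ofNat]
  have h4' : rescale (-4) BB * (v ^ 4 - 1) = -4 * X := by
    rw [← hv4, BB_mul, map_neg, map_ofNat]
  have h2 : rescale 2 BB * (u ^ 2 - 1) = 2 * X := by
    rw [← hu2, BB_mul, map_ofNat]
  have h2' : rescale (-2) BB * (v ^ 2 - 1) = -2 * X := by
    rw [← hv2, BB_mul, map_neg, map_ofNat]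
  have hD : (u ^ 4 - 1) * ((v ^ 4 - 1) * ((u ^ 2 - 1) * (v ^ 2 - 1))) ≠ 0 := by
    refine mul_ne_zero ?_ (mul_ne_zero ?_ (mul_ne_zero ?_ ?_)) <;>
      [rw [← hu4]; rw [← hv4]; rw [← hu2]; rw [← hv2]] <;>
      exact hdom _ (by norm_num)
  apply mul_right_cancel₀ hD
  linear_combination
    (u * (v^4-1) * (u^2-1) * (v^2-1)) * h4 + (v * (u^4-1) * (u^2-1) * (v^2-1)) * h4'
    - (u * (v^2-1) * (u^4-1) * (v^4-1)) * h2 - (v * (u^2-1) * (u^4-1) * (v^4-1)) * h2'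
    + (X * (4*u^2*v^5 - 8*u^2*v^3 - 2*v^5 + 4*v^3 + 4*u^2*v - 2*v - 4*u^5*v^2 + 2*u^5
        + 8*u^3*v^2 - 4*u^3 + 2*u - 2*u^4*v^5 - 2*u^4*v + 4*u^4*v^3 + 2*u^5*v^4 + 2*u*v^4
        - 4*u^3*v^4 - 4*u*v^2)) * huv

lemma coeff_part (t : ℚ) (m : ℕ) (hm : Even m) :
    (coeff m) (rescale t BB * E 1 + rescale (-t) BB * E (-1)) =
      2 * ∑ p ∈ range (m + 1), t ^ p * bernoulli p /
        ((p.factorial : ℚ) * ((m - p).factorial : ℚ)) := by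
  rw [map_add, coeff_mul, coeff_mul]
  rw [Nat.sum_antidiagonal_eq_sum_range_succ_mk, Nat.sum_antidiagonal_eq_sum_range_succ_mk]
  rw [← Finset.sum_add_distrib, Finset.mul_sum]
  refine Finset.sum_congr rfl fun p hp => ?_
  rw [Finset.mem_range] at hp
  have hBB : ∀ s : ℚ, (coeff p) (rescale s BB) = s ^ p * (bernoulli p / p.factorial) := by
    intro s
    rw [coeff_rescale, BB, bernoulliPowerSeries, coeff_mk]
    simp
  have hE1 : (coeff (m - p)) (E 1) = 1 / (m - p).factorial := by
    rw [E, rescale_one, RingHom.id_apply, coeff_exp]; simp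
  have hE1' : (coeff (m - p)) (E (-1)) = (-1) ^ (m - p) * (1 / (m - p).factorial) := by
    rw [E, coeff_rescale, coeff_exp]; simp
  rw [hBB, hBB, hE1, hE1']
  have hsign : (-t) ^ p * ((-1 : ℚ) ^ (m - p)) = t ^ p := by
    rw [neg_pow, mul_comm ((-1:ℚ)^p), mul_assoc, ← pow_add]
    have : p + (m - p) = m := by omega
    rw [this, hm.neg_one_pow, mul_one]
  linear_combination (bernoulli p / (p.factorial : ℚ) * (1 / ((m - p).factorial : ℚ))) * hsign

lemma sum_eq (n : ℕ) :
    ∑ p ∈ range (2 * n + 1), (4 : ℚ) ^ p * bernoulli p /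
        ((p.factorial : ℚ) * ((2 * n - p).factorial : ℚ)) =
      ∑ p ∈ range (2 * n + 1), (2 : ℚ) ^ p * bernoulli p /
        ((p.factorial : ℚ) * ((2 * n - p).factorial : ℚ)) := by
  have h := congrArg (coeff (2 * n)) main_series
  rw [coeff_part 4 (2 * n) (even_two_mul n), coeff_part 2 (2 * n) (even_two_mul n)] at h
  linarith

lemma sum_choose_eq (n : ℕ) :
    ∑ p ∈ range (2 * n + 1), ((2 * n).choose p : ℚ) * (4 ^ p - 2 ^ p) * bernoulli p = 0 := by
  have h := sum_eq n
  have key : ∑ p ∈ range (2 * n + 1), ((2 * n).choose p : ℚ) * (4 ^ p - 2 ^ p) * bernoulli p =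
      ((2 * n).factorial : ℚ) *
        (∑ p ∈ range (2 * n + 1), (4 : ℚ) ^ p * bernoulli p /
          ((p.factorial : ℚ) * ((2 * n - p).factorial : ℚ)) -
         ∑ p ∈ range (2 * n + 1), (2 : ℚ) ^ p * bernoulli p /
          ((p.factorial : ℚ) * ((2 * n - p).factorial : ℚ))) := by
    rw [← Finset.sum_sub_distrib, Finset.mul_sum]
    refine Finset.sum_congr rfl fun p hp => ?_
    rw [Finset.mem_range] at hp
    have hle : p ≤ 2 * n := by omega
    rw [Nat.cast_choose ℚ hle]
    have h1 : (p.factorial : ℚ) ≠ 0 := Nat.cast_ne_zero.mpr p.factorial_ne_zero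
    have h2 : ((2 * n - p).factorial : ℚ) ≠ 0 := Nat.cast_ne_zero.mpr (2 * n - p).factorial_ne_zero
    field_simp
  rw [key, h]
  ring

lemma bernoulli_key (n : ℕ) (hn : n ≠ 0) :
    ∑ j ∈ range n, ((2 * n).choose (2 * (j + 1)) : ℚ) *
      (16 ^ (j + 1) - 4 ^ (j + 1)) * bernoulli (2 * (j + 1)) = 2 * n := by
  have h := sum_choose_eq n
  set f : ℕ → ℚ := fun p => ((2 * n).choose p : ℚ) * (4 ^ p - 2 ^ p) * bernoulli p with hf
  have hsplit : ∑ p ∈ range (2 * n + 1), f p =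
      (∑ p ∈ (range (2 * n + 1)).filter (fun p => Even p), f p) +
      (∑ p ∈ (range (2 * n + 1)).filter (fun p => ¬ Even p), f p) :=
    (Finset.sum_filter_add_sum_filter_not _ _ _).symm
  have hodd : ∑ p ∈ (range (2 * n + 1)).filter (fun p => ¬ Even p), f p = -(2 * n) := by
    rw [Finset.sum_eq_single 1]
    · have : ((2 * n).choose 1 : ℚ) = 2 * n := by
        rw [Nat.choose_one_right]; push_cast; ring
      rw [hf]; simp only []
      rw [this, bernoulli_one]
      ring
    · intro p hp hne
      simp only [Finset.mem_filter, Finset.mem_range] at hp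
      have hodd' : Odd p := Nat.not_even_iff_odd.mp hp.2
      have h3 : 1 < p := by
        rcases hodd' with ⟨k, hk⟩
        omega
      rw [hf]; simp only []
      rw [bernoulli_eq_bernoulli'_of_ne_one (by omega), bernoulli'_eq_zero_of_odd hodd' h3]
      ring
    · intro hx
      simp only [Finset.mem_filter, Finset.mem_range] at hx
      exfalso
      exact hx ⟨by omega, by simp⟩
  have heven : ∑ p ∈ (range (2 * n + 1)).filter (fun p => Even p), f p =
      ∑ j ∈ range (n + 1), f (2 * j) := by
    refine (Finset.sum_nbij' (fun j => 2 * j) (fun p => p / 2) ?_ ?_ ?_ ?_ ?_).symm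
    · intro j hj
      simp only [Finset.mem_range] at hj
      simp only [Finset.mem_filter, Finset.mem_range]
      exact ⟨by omega, even_two_mul j⟩
    · intro p hp
      simp only [Finset.mem_filter, Finset.mem_range] at hp
      obtain ⟨k, hk⟩ := hp.2
      simp only [Finset.mem_range]
      omega
    · intro j hj; omega
    · intro p hp
      simp only [Finset.mem_filter, Finset.mem_range] at hp
      obtain ⟨k, hk⟩ := hp.2
      omega
    · intro j hj; rfl
  have hshift : ∑ j ∈ range (n + 1), f (2 * j) = (∑ j ∈ range n, f (2 * (j + 1))) + f 0 := by
    exact Finset.sum_range_succ' (fun j => f (2 * j)) n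
  have hf0 : f 0 = 0 := by rw [hf]; simp
  have hterm : ∀ j, f (2 * (j + 1)) = ((2 * n).choose (2 * (j + 1)) : ℚ) *
      (16 ^ (j + 1) - 4 ^ (j + 1)) * bernoulli (2 * (j + 1)) := by
    intro j
    rw [hf]; simp only []
    have h4 : (4 : ℚ) ^ (2 * (j + 1)) = 16 ^ (j + 1) := by
      rw [pow_mul]; norm_num
    have h2 : (2 : ℚ) ^ (2 * (j + 1)) = 4 ^ (j + 1) := by
      rw [pow_mul]; norm_num
    rw [h4, h2]
  rw [hsplit, hodd, heven, hshift, hf0] at h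
  have hcongr : ∑ j ∈ range n, ((2 * n).choose (2 * (j + 1)) : ℚ) *
      (16 ^ (j + 1) - 4 ^ (j + 1)) * bernoulli (2 * (j + 1)) =
      ∑ j ∈ range n, f (2 * (j + 1)) :=
    Finset.sum_congr rfl fun j _ => (hterm j).symm
  rw [hcongr]
  linarith

end PS

lemma filter_antidiagonal_sum (n : ℕ) (g : ℕ × ℕ → ℝ) :
    ∑ a ∈ (antidiagonal n).filter (fun a => a.1 < n), g a =
      ∑ i ∈ range n, g (i, n - i) := by
  rw [Finset.sum_filter, Nat.sum_antidiagonal_eq_sum_range_succ_mk, Finset.sum_range_succ]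
  simp only [lt_self_iff_false, if_false, add_zero]
  exact Finset.sum_congr rfl fun k hk => by
    rw [Finset.mem_range] at hk
    rw [if_pos hk]

noncomputable def qterm (n j : ℕ) : ℚ :=
  (16 ^ (j + 1) - 4 ^ (j + 1)) * bernoulli (2 * (j + 1)) /
    (2 * ((2 * (j + 1)).factorial : ℚ) * ((2 * (n - 1 - j)).factorial : ℚ))

lemma qkey (n : ℕ) (hn : n ≠ 0) :
    ∑ j ∈ range n, qterm n j = (n : ℚ) / ((2 * n).factorial : ℚ) := by
  have h := bernoulli_key n hn
  have hterm : ∀ j ∈ range n, qterm n j =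
      (((2 * n).choose (2 * (j + 1)) : ℚ) * (16 ^ (j + 1) - 4 ^ (j + 1)) *
        bernoulli (2 * (j + 1))) / (2 * ((2 * n).factorial : ℚ)) := by
    intro j hj
    rw [Finset.mem_range] at hj
    have hle : 2 * (j + 1) ≤ 2 * n := by omega
    rw [Nat.cast_choose ℚ hle]
    have hsub : 2 * n - 2 * (j + 1) = 2 * (n - 1 - j) := by omega
    rw [hsub]
    have h1 : ((2 * (j + 1)).factorial : ℚ) ≠ 0 := Nat.cast_ne_zero.mpr (Nat.factorial_ne_zero _)
    have h2 : ((2 * (n - 1 - j)).factorial : ℚ) ≠ 0 := Nat.cast_ne_zero.mpr (Nat.factorial_ne_zero _)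
    have h3 : ((2 * n).factorial : ℚ) ≠ 0 := Nat.cast_ne_zero.mpr (Nat.factorial_ne_zero _)
    rw [qterm]
    field_simp
  rw [Finset.sum_congr rfl hterm, ← Finset.sum_div, h]
  have h3 : ((2 * n).factorial : ℚ) ≠ 0 := Nat.cast_ne_zero.mpr (Nat.factorial_ne_zero _)
  field_simp

lemma newton_cc (n : ℕ) (hn : n ≠ 0) :
    (n : ℝ) * cc n =
      (-1) ^ (n + 1) * ∑ a ∈ (antidiagonal n).filter (fun a => a.1 < n),
        (-1 : ℝ) ^ a.1 * cc a.1 * pp a.2 := by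
  rw [filter_antidiagonal_sum n (fun a => (-1 : ℝ) ^ a.1 * cc a.1 * pp a.2)]
  rw [← Finset.sum_range_reflect]
  have hterm : ∀ j ∈ range n, (-1 : ℝ) ^ (n + 1) *
      ((-1 : ℝ) ^ (n - 1 - j) * cc (n - 1 - j) * pp (n - (n - 1 - j))) =
      π ^ (2 * n) / 4 ^ n * ((qterm n j : ℚ) : ℝ) := by
    intro j hj
    rw [Finset.mem_range] at hj
    obtain ⟨i, hi⟩ : ∃ i, n - 1 - j = i := ⟨_, rfl⟩
    rw [hi]
    have hij : i + (j + 1) = n := by omega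
    have hnn : n - i = j + 1 := by omega
    rw [hnn, pp_eq (Nat.succ_ne_zero j), Z, cc, qterm, hi]
    have hsign : (-1 : ℝ) ^ (n + 1) * ((-1 : ℝ) ^ i * (-1 : ℝ) ^ (j + 1 + 1)) = 1 := by
      rw [← pow_add, ← pow_add]
      have : n + 1 + (i + (j + 1 + 1)) = 2 * (n + 1) := by omega
      rw [this, pow_mul]
      norm_num
    have hpow : (2 : ℝ) ^ (2 * (j + 1) - 1) = 4 ^ (j + 1) / 2 := by
      have e1 : 2 * (j + 1) - 1 = 2 * j + 1 := by omega
      rw [e1, pow_succ, pow_mul]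
      norm_num
      ring
    have hpi : π ^ (2 * i) * π ^ (2 * (j + 1)) = π ^ (2 * n) := by
      rw [← pow_add]
      congr 1
      omega
    have h4 : (4 : ℝ) ^ i * 4 ^ (j + 1) = 4 ^ n := by
      rw [← pow_add]
      congr 1
    have hf1 : (((2 * i).factorial : ℕ) : ℝ) ≠ 0 := Nat.cast_ne_zero.mpr (Nat.factorial_ne_zero _)
    have hf2 : (((2 * (j + 1)).factorial : ℕ) : ℝ) ≠ 0 := Nat.cast_ne_zero.mpr (Nat.factorial_ne_zero _)
    have h4i : (4 : ℝ) ^ i ≠ 0 := by positivity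
    have h4j : (4 : ℝ) ^ (j + 1) ≠ 0 := by positivity
    have h4n : (4 : ℝ) ^ n ≠ 0 := by positivity
    have h16 : (16 : ℝ) ^ (j + 1) = 4 ^ (j + 1) * 4 ^ (j + 1) := by
      rw [← mul_pow]; norm_num
    push_cast
    rw [hpow, h16, ← hpi, ← h4]
    linear_combination (norm := skip) (π ^ (2 * i) / (4 ^ i * (((2 * i).factorial : ℕ) : ℝ)) *
      ((1 - (1 / 4 : ℝ) ^ (j + 1)) * (4 ^ (j + 1) / 2 * π ^ (2 * (j + 1)) *
      ((bernoulli (2 * (j + 1)) : ℚ) : ℝ) / (((2 * (j + 1)).factorial : ℕ) : ℝ)))) * hsign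
    rw [one_div_pow]
    field_simp
    ring
  rw [Finset.mul_sum, Finset.sum_congr rfl hterm]
  rw [← Finset.mul_sum]
  have hcast : ∑ j ∈ range n, ((qterm n j : ℚ) : ℝ) = (((∑ j ∈ range n, qterm n j : ℚ)) : ℝ) := by
    push_cast
    rfl
  rw [hcast, qkey n hn]
  rw [cc]
  push_cast
  have h3 : (((2 * n).factorial : ℕ) : ℝ) ≠ 0 := Nat.cast_ne_zero.mpr (Nat.factorial_ne_zero _)
  have h4n : (4 : ℝ) ^ n ≠ 0 := by positivity
  field_simp

lemma ee_eq_cc (n : ℕ) : ee n = cc n := by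
  induction n using Nat.strong_induction_on with
  | _ n ih =>
    rcases Nat.eq_zero_or_pos n with h | h
    · subst h
      have h1 : ee 0 = 1 := by
        rw [ee]
        have : ∀ f : {f : Fin 0 → ℕ // StrictMono f}, (∏ i, aa (f.1 i)) = 1 := by
          intro f; simp
        rw [tsum_congr this]
        simp [tsum_const]
        rw [Fintype.card_eq_one_iff]
        exact ⟨⟨Fin.elim0, fun a => a.elim0⟩, fun f => Subtype.ext (funext fun a => a.elim0)⟩
      have h2 : cc 0 = 1 := by simp [cc]
      rw [h1, h2]
    · have key : (n : ℝ) * ee n = (n : ℝ) * cc n := by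
        rw [newton_ee n, newton_cc n h.ne']
        congr 1
        refine Finset.sum_congr rfl fun a ha => ?_
        simp only [mem_filter, Finset.HasAntidiagonal.mem_antidiagonal] at ha
        rw [ih a.1 (by omega)]
      have hn : (n : ℝ) ≠ 0 := Nat.cast_ne_zero.mpr h.ne'
      exact mul_left_cancel₀ hn key

end MtvAux

open MtvAux in
/-- `t({2}^n) = π^{2n}/(2^{2n}(2n)!)`. -/
theorem mtv_two_rep (n : ℕ) :
    mtv (List.replicate n 2) = π ^ (2 * n) / (2 ^ (2 * n) * (Nat.factorial (2 * n) : ℝ)) := by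
  have h1 : mtv (List.replicate n 2) = ee (List.replicate n 2).length := by
    rw [mtv, ee]
    exact tsum_congr fun f => Finset.prod_congr rfl fun i _ => by
      rw [List.get_eq_getElem, List.getElem_replicate]; rfl
  rw [h1, List.length_replicate, ee_eq_cc]
  rw [cc]
  norm_num [pow_mul]
end
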